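/- Let σ > 0 and define g : ℝ → ℝ by g(a) = D( N(0,σ²) ‖ (1/2)·N(−a,σ²) + (1/2)·N(a,σ²) ). Then the derivatives of g at a = 0 of orders 0 through 3 all vanish, and the fourth derivative satisfies g⁗(0) = 6/σ⁴ (so the fourth-order Taylor term of g at 0 is a⁴/(4σ⁴)). -/

import Mathlib

open MeasureTheory ProbabilityTheory Real
open scoped ENNReal NNReal
open Filter
set_option linter.unusedSectionVars false

/-- The Kullback–Leibler divergence `D(P‖Q) = ∫ log(dP/dQ) dP`
(for `P ≪ Q` this equals `∫ p(x) ln(p(x)/q(x)) dx` where `p, q` are densities). -/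
noncomputable def klDiv {α : Type*} [MeasurableSpace α] (P Q : Measure α) : ℝ :=
  ∫ x, Real.log ((P.rnDeriv Q) x).toReal ∂P

/-- `g(a) = D(N(0,σ²) ‖ (1/2)·N(−a,σ²) + (1/2)·N(a,σ²))`, the Kullback–Leibler
divergence between the centered Gaussian and the equal mixture of two
Gaussians with means `∓a` and variance `σ²`. -/
noncomputable def klMix (σ : ℝ) : ℝ → ℝ := fun a =>
  klDiv (gaussianReal 0 (σ ^ 2).toNNReal)
    ((1 / 2 : ℝ≥0∞) • gaussianReal (-a) (σ ^ 2).toNNReal +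
      (1 / 2 : ℝ≥0∞) • gaussianReal a (σ ^ 2).toNNReal)

set_option linter.unusedSectionVars false


lemma KL_hasDerivAt_tanh (y : ℝ) : HasDerivAt Real.tanh (1 - Real.tanh y ^ 2) y := by
  have h : HasDerivAt (fun z => Real.sinh z / Real.cosh z)
      ((Real.cosh y * Real.cosh y - Real.sinh y * Real.sinh y) / Real.cosh y ^ 2) y :=
    (Real.hasDerivAt_sinh y).div (Real.hasDerivAt_cosh y) (Real.cosh_pos y).ne'
  have he : (fun z => Real.sinh z / Real.cosh z) = Real.tanh := by
    funext z; rw [Real.tanh_eq_sinh_div_cosh]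
  rw [he] at h
  convert h using 1
  rw [Real.tanh_eq_sinh_div_cosh]
  have hc := (Real.cosh_pos y).ne'
  field_simp

lemma KL_tanh_sq_le_one (y : ℝ) : Real.tanh y ^ 2 ≤ 1 := by
  rw [Real.tanh_eq_sinh_div_cosh, div_pow]
  rw [div_le_one (by positivity)]
  nlinarith [Real.cosh_sq_sub_sinh_sq y]

lemma KL_abs_tanh_le_one (y : ℝ) : |Real.tanh y| ≤ 1 := by
  have := KL_tanh_sq_le_one y
  nlinarith [abs_nonneg (Real.tanh y), sq_abs (Real.tanh y)]

lemma KL_integrable_pow_mul_exp {b : ℝ} (hb : 0 < b) (n : ℕ) :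
    Integrable (fun x : ℝ => x ^ n * Real.exp (-b * x ^ 2)) := by
  have := integrable_rpow_mul_exp_neg_mul_sq hb (s := (n : ℝ)) (by linarith [Nat.cast_nonneg (α := ℝ) n])
  simpa [Real.rpow_natCast] using this

lemma KL_moment_rec {b : ℝ} (hb : 0 < b) (n : ℕ) :
    ∫ x : ℝ, x ^ (n + 2) * Real.exp (-b * x ^ 2)
      = ((n : ℝ) + 1) / (2 * b) * ∫ x : ℝ, x ^ n * Real.exp (-b * x ^ 2) := by
  have hu : ∀ x : ℝ, HasDerivAt (fun x : ℝ => x ^ (n + 1)) (((n : ℝ) + 1) * x ^ n) x := by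
    intro x
    simpa using hasDerivAt_pow (n + 1) x
  have hv : ∀ x : ℝ, HasDerivAt (fun x : ℝ => -Real.exp (-b * x ^ 2) / (2 * b))
      (x * Real.exp (-b * x ^ 2)) x := by
    intro x
    have h1 : HasDerivAt (fun x : ℝ => -b * x ^ 2) (-b * (2 * x)) x := by
      simpa using ((hasDerivAt_pow 2 x).const_mul (-b))
    have h2 := (h1.exp).neg.div_const (2 * b)
    refine h2.congr_deriv ?_
    field_simp
  have key := integral_mul_deriv_eq_deriv_mul_of_integrable (fun x _ => hu x) (fun x _ => hv x) ?_ ?_ ?_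
  · rw [show (fun x : ℝ => x ^ (n+2) * Real.exp (-b * x ^ 2))
        = fun x : ℝ => x ^ (n+1) * (x * Real.exp (-b * x ^ 2)) by funext x; ring]
    rw [key, ← integral_neg, ← integral_const_mul (((n:ℝ)+1) / (2*b))]
    congr 1; funext x
    field_simp
  · have := KL_integrable_pow_mul_exp hb (n + 2)
    apply this.congr
    filter_upwards with x
    simp only [Pi.mul_apply]
    ring
  · have := (KL_integrable_pow_mul_exp hb n).const_mul (-(((n:ℝ)+1) / (2*b)))
    apply this.congr
    filter_upwards with x
    simp only [Pi.mul_apply]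
    field_simp
  · have := (KL_integrable_pow_mul_exp hb (n+1)).const_mul (-(2*b)⁻¹)
    apply this.congr
    filter_upwards with x
    simp only [Pi.mul_apply]
    field_simp

section Sigma
variable {σ : ℝ} (hσ : 0 < σ)

lemma KL_hv : ((σ ^ 2).toNNReal : ℝ) = σ ^ 2 := by
  rw [Real.coe_toNNReal _ (by positivity)]

include hσ

lemma KL_hv0 : (σ ^ 2).toNNReal ≠ 0 := by
  simp only [ne_eq, Real.toNNReal_eq_zero, not_le]
  positivity

/-- pdf rewrite: `gaussianPDFReal μ v x = C * exp (-(1/(2σ²)) * (x-μ)^2)` -/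
lemma KL_pdf_eq (μ x : ℝ) :
    gaussianPDFReal μ (σ ^ 2).toNNReal x
      = (Real.sqrt (2 * π * σ ^ 2))⁻¹ * Real.exp (-(1/(2*σ^2)) * (x - μ) ^ 2) := by
  rw [gaussianPDFReal, KL_hv (σ := σ), one_div]
  congr 2
  ring

lemma KL_integral_P (f : ℝ → ℝ) :
    ∫ x, f x ∂(gaussianReal 0 (σ ^ 2).toNNReal)
      = ∫ x, gaussianPDFReal 0 (σ ^ 2).toNNReal x * f x := by
  rw [gaussianReal_of_var_ne_zero _ (KL_hv0 hσ)]
  have hd : gaussianPDF 0 (σ ^ 2).toNNReal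
      = fun x => ((Real.toNNReal (gaussianPDFReal 0 (σ ^ 2).toNNReal x) : ℝ≥0) : ℝ≥0∞) := rfl
  rw [hd, integral_withDensity_eq_integral_smul
    (by exact (measurable_gaussianPDFReal _ _).real_toNNReal) f]
  congr 1; funext x
  rw [NNReal.smul_def, smul_eq_mul, Real.coe_toNNReal _ (gaussianPDFReal_nonneg _ _ _)]

lemma KL_integrable_P_iff (f : ℝ → ℝ) :
    Integrable f (gaussianReal 0 (σ ^ 2).toNNReal)
      ↔ Integrable (fun x => gaussianPDFReal 0 (σ ^ 2).toNNReal x * f x) := by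
  rw [gaussianReal_of_var_ne_zero _ (KL_hv0 hσ)]
  have hd : gaussianPDF 0 (σ ^ 2).toNNReal
      = fun x => ((Real.toNNReal (gaussianPDFReal 0 (σ ^ 2).toNNReal x) : ℝ≥0) : ℝ≥0∞) := rfl
  rw [hd, integrable_withDensity_iff_integrable_smul
    (by exact (measurable_gaussianPDFReal _ _).real_toNNReal)]
  constructor <;> intro h <;> apply h.congr <;> filter_upwards with x <;>
    rw [NNReal.smul_def, smul_eq_mul, Real.coe_toNNReal _ (gaussianPDFReal_nonneg _ _ _)]

/-- volume-integrability of pdf times a power -/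
lemma KL_integrable_pdf_pow (n : ℕ) :
    Integrable (fun x => gaussianPDFReal 0 (σ ^ 2).toNNReal x * x ^ n) := by
  have hb : 0 < 1/(2*σ^2) := by positivity
  have := (KL_integrable_pow_mul_exp hb n).const_mul (Real.sqrt (2 * π * σ ^ 2))⁻¹
  apply this.congr
  filter_upwards with x
  rw [KL_pdf_eq hσ]
  ring_nf

lemma KL_integrable_P_pow (n : ℕ) :
    Integrable (fun x : ℝ => x ^ n) (gaussianReal 0 (σ ^ 2).toNNReal) := by
  rw [KL_integrable_P_iff hσ]
  exact KL_integrable_pdf_pow hσ n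

lemma KL_integrable_P_abs_pow (n : ℕ) :
    Integrable (fun x : ℝ => |x| ^ n) (gaussianReal 0 (σ ^ 2).toNNReal) := by
  have := (KL_integrable_P_pow hσ n).abs
  apply this.congr
  filter_upwards with x
  rw [abs_pow]

lemma KL_moment (n : ℕ) :
    ∫ x, gaussianPDFReal 0 (σ ^ 2).toNNReal x * x ^ n
      = (Real.sqrt (2 * π * σ ^ 2))⁻¹ * ∫ x : ℝ, x ^ n * Real.exp (-(1/(2*σ^2)) * x ^ 2) := by
  rw [← integral_const_mul]
  congr 1; funext x
  rw [KL_pdf_eq hσ]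
  ring_nf

lemma KL_moment_zero :
    ∫ x, gaussianPDFReal 0 (σ ^ 2).toNNReal x * x ^ 0 = 1 := by
  simp only [pow_zero, mul_one]
  exact integral_gaussianPDFReal_eq_one 0 (KL_hv0 hσ)

end Sigma

section Sigma2
variable {σ : ℝ} (hσ : 0 < σ)
include hσ

lemma KL_moment_two :
    ∫ x, gaussianPDFReal 0 (σ ^ 2).toNNReal x * x ^ 2 = σ ^ 2 := by
  have hb : 0 < 1/(2*σ^2) := by positivity
  have h2 := KL_moment_rec hb 0
  have hb' : ((0:ℕ):ℝ) + 1 = 1 := by norm_num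
  have hc : (1:ℝ) / (2 * (1/(2*σ^2))) = σ ^ 2 := by field_simp
  rw [hb', hc] at h2
  have h0 := KL_moment_zero hσ
  rw [KL_moment hσ 0] at h0
  rw [KL_moment hσ 2]
  show (Real.sqrt (2 * π * σ ^ 2))⁻¹ * ∫ x : ℝ, x ^ (0+2) * Real.exp (-(1/(2*σ^2)) * x ^ 2) = σ ^ 2
  rw [h2]
  rw [show (Real.sqrt (2 * π * σ ^ 2))⁻¹ * (σ ^ 2 * ∫ x : ℝ, x ^ 0 * Real.exp (-(1/(2*σ^2)) * x ^ 2))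
    = σ ^ 2 * ((Real.sqrt (2 * π * σ ^ 2))⁻¹ * ∫ x : ℝ, x ^ 0 * Real.exp (-(1/(2*σ^2)) * x ^ 2)) by ring,
    h0, mul_one]

lemma KL_moment_four :
    ∫ x, gaussianPDFReal 0 (σ ^ 2).toNNReal x * x ^ 4 = 3 * σ ^ 4 := by
  have hb : 0 < 1/(2*σ^2) := by positivity
  have h4 := KL_moment_rec hb 2
  have hb' : ((2:ℕ):ℝ) + 1 = 3 := by norm_num
  have hc : (3:ℝ) / (2 * (1/(2*σ^2))) = 3 * σ ^ 2 := by field_simp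
  rw [hb', hc] at h4
  have h2 := KL_moment_two hσ
  rw [KL_moment hσ 2] at h2
  rw [KL_moment hσ 4]
  show (Real.sqrt (2 * π * σ ^ 2))⁻¹ * ∫ x : ℝ, x ^ (2+2) * Real.exp (-(1/(2*σ^2)) * x ^ 2) = 3 * σ ^ 4
  rw [h4]
  rw [show (Real.sqrt (2 * π * σ ^ 2))⁻¹ * (3 * σ ^ 2 * ∫ x : ℝ, x ^ 2 * Real.exp (-(1/(2*σ^2)) * x ^ 2))
    = 3 * σ ^ 2 * ((Real.sqrt (2 * π * σ ^ 2))⁻¹ * ∫ x : ℝ, x ^ 2 * Real.exp (-(1/(2*σ^2)) * x ^ 2)) by ring,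
    h2]
  ring

end Sigma2


section Sigma3
variable {σ : ℝ} (hσ : 0 < σ)
include hσ

lemma KL_mix_density (a : ℝ) :
    ((1 / 2 : ℝ≥0∞) • gaussianReal (-a) (σ ^ 2).toNNReal +
        (1 / 2 : ℝ≥0∞) • gaussianReal a (σ ^ 2).toNNReal)
      = volume.withDensity
          (fun x => (1/2 : ℝ≥0∞) * gaussianPDF (-a) (σ ^ 2).toNNReal x
            + (1/2 : ℝ≥0∞) * gaussianPDF a (σ ^ 2).toNNReal x) := by
  rw [gaussianReal_of_var_ne_zero _ (KL_hv0 hσ), gaussianReal_of_var_ne_zero _ (KL_hv0 hσ)]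
  rw [show (fun x => (1/2 : ℝ≥0∞) * gaussianPDF (-a) (σ ^ 2).toNNReal x
            + (1/2 : ℝ≥0∞) * gaussianPDF a (σ ^ 2).toNNReal x)
      = ((1/2 : ℝ≥0∞) • gaussianPDF (-a) (σ ^ 2).toNNReal)
        + ((1/2 : ℝ≥0∞) • gaussianPDF a (σ ^ 2).toNNReal) from rfl]
  rw [withDensity_add_left ((measurable_gaussianPDF _ _).const_smul _),
    withDensity_smul _ (measurable_gaussianPDF _ _),
    withDensity_smul _ (measurable_gaussianPDF _ _)]

lemma KL_cosh_identity (a x : ℝ) :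
    gaussianPDFReal (-a) (σ ^ 2).toNNReal x / 2 + gaussianPDFReal a (σ ^ 2).toNNReal x / 2
      = gaussianPDFReal 0 (σ ^ 2).toNNReal x
        * (Real.exp (-(a^2/(2*σ^2))) * Real.cosh (a*x/σ^2)) := by
  rw [KL_pdf_eq hσ, KL_pdf_eq hσ, KL_pdf_eq hσ, Real.cosh_eq]
  have h1 : Real.exp (-(1/(2*σ^2)) * (x - -a) ^ 2)
      = Real.exp (-(1/(2*σ^2)) * x^2) * (Real.exp (-(a^2/(2*σ^2))) * Real.exp (-(a*x/σ^2))) := by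
    rw [← Real.exp_add, ← Real.exp_add]
    congr 1
    field_simp
    ring
  have h2 : Real.exp (-(1/(2*σ^2)) * (x - a) ^ 2)
      = Real.exp (-(1/(2*σ^2)) * x^2) * (Real.exp (-(a^2/(2*σ^2))) * Real.exp (a*x/σ^2)) := by
    rw [← Real.exp_add, ← Real.exp_add]
    congr 1
    field_simp
    ring
  rw [h1, h2]
  ring

lemma KL_klMix_eq (a : ℝ) :
    klMix σ a = ∫ x, (a^2/(2*σ^2) - Real.log (Real.cosh (a*x/σ^2)))
      ∂(gaussianReal 0 (σ ^ 2).toNNReal) := by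
  have hv0 := KL_hv0 hσ
  set v := (σ ^ 2).toNNReal
  set P := gaussianReal 0 v with hP
  set qf : ℝ → ℝ≥0∞ := fun x => (1/2 : ℝ≥0∞) * gaussianPDF (-a) v x
      + (1/2 : ℝ≥0∞) * gaussianPDF a v x with hqf
  have hqm : Measurable qf :=
    ((measurable_gaussianPDF _ _).const_mul _).add ((measurable_gaussianPDF _ _).const_mul _)
  have hq0 : ∀ᵐ x ∂(volume : Measure ℝ), qf x ≠ 0 := by
    filter_upwards with x
    have := gaussianPDF_pos (-a) hv0 x
    simp only [hqf, ne_eq, add_eq_zero, mul_eq_zero]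
    intro ⟨h1, _⟩
    rcases h1 with h | h
    · norm_num at h
    · exact absurd h this.ne'
  have hqtop : ∀ᵐ x ∂(volume : Measure ℝ), qf x ≠ ∞ := by
    filter_upwards with x
    simp only [hqf, ne_eq]
    refine ENNReal.add_ne_top.mpr ⟨?_, ?_⟩ <;>
      exact ENNReal.mul_ne_top (by norm_num) ENNReal.ofReal_ne_top
  have hrn := Measure.rnDeriv_withDensity_right P volume hqm.aemeasurable hq0 hqtop
  have hrn2 := rnDeriv_gaussianReal 0 v
  have hPac : P ≪ volume := gaussianReal_absolutelyContinuous 0 hv0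
  have hae : ∀ᵐ x ∂P, (P.rnDeriv (volume.withDensity qf)) x = (qf x)⁻¹ * gaussianPDF 0 v x := by
    apply hPac.ae_le
    filter_upwards [hrn, hrn2] with x h1 h2
    rw [h1, h2]
  rw [show klMix σ a = klDiv P ((1 / 2 : ℝ≥0∞) • gaussianReal (-a) v +
      (1 / 2 : ℝ≥0∞) • gaussianReal a v) from rfl]
  rw [klDiv, KL_mix_density hσ a]
  refine integral_congr_ae ?_
  filter_upwards [hae] with x hx
  rw [hx]
  -- now pointwise computation
  have hp0 : 0 < gaussianPDFReal 0 v x := gaussianPDFReal_pos _ _ _ hv0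
  have hpm : 0 ≤ gaussianPDFReal (-a) v x := gaussianPDFReal_nonneg _ _ _
  have hpp : 0 ≤ gaussianPDFReal a v x := gaussianPDFReal_nonneg _ _ _
  have hq_ofReal : qf x = ENNReal.ofReal
      (gaussianPDFReal (-a) v x / 2 + gaussianPDFReal a v x / 2) := by
    rw [hqf]
    simp only [gaussianPDF]
    rw [ENNReal.ofReal_add (by positivity) (by positivity)]
    have half : ∀ y : ℝ, ENNReal.ofReal (y/2) = 1/2 * ENNReal.ofReal y := by
      intro y
      rw [ENNReal.ofReal_div_of_pos two_pos, ENNReal.ofReal_ofNat,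
        ENNReal.div_eq_inv_mul, one_div]
    rw [half, half]
  have hcosh : 0 < Real.cosh (a*x/σ^2) := Real.cosh_pos _
  have hqR : gaussianPDFReal (-a) v x / 2 + gaussianPDFReal a v x / 2
      = gaussianPDFReal 0 v x * (Real.exp (-(a^2/(2*σ^2))) * Real.cosh (a*x/σ^2)) :=
    KL_cosh_identity hσ a x
  rw [hq_ofReal, hqR]
  have hE : (0:ℝ) < Real.exp (-(a^2/(2*σ^2))) := Real.exp_pos _
  have htr : ((ENNReal.ofReal (gaussianPDFReal 0 v x
        * (Real.exp (-(a^2/(2*σ^2))) * Real.cosh (a*x/σ^2))))⁻¹ * gaussianPDF 0 v x).toReal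
      = (gaussianPDFReal 0 v x * (Real.exp (-(a^2/(2*σ^2))) * Real.cosh (a*x/σ^2)))⁻¹
        * gaussianPDFReal 0 v x := by
    rw [gaussianPDF, ENNReal.toReal_mul, ENNReal.toReal_inv,
      ENNReal.toReal_ofReal (by positivity), ENNReal.toReal_ofReal hp0.le]
  rw [htr]
  rw [show (gaussianPDFReal 0 v x * (Real.exp (-(a^2/(2*σ^2))) * Real.cosh (a*x/σ^2)))⁻¹
        * gaussianPDFReal 0 v x
      = (Real.exp (-(a^2/(2*σ^2))) * Real.cosh (a*x/σ^2))⁻¹ by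
    field_simp]
  rw [Real.log_inv, Real.log_mul (Real.exp_ne_zero _) hcosh.ne', Real.log_exp]
  ring

end Sigma3

noncomputable def KLk0 (σ a x : ℝ) : ℝ := a^2/(2*σ^2) - Real.log (Real.cosh (a*x/σ^2))
noncomputable def KLk1 (σ a x : ℝ) : ℝ := a/σ^2 - x/σ^2 * Real.tanh (a*x/σ^2)
noncomputable def KLk2 (σ a x : ℝ) : ℝ := 1/σ^2 - (x/σ^2)^2 * (1 - Real.tanh (a*x/σ^2)^2)
noncomputable def KLk3 (σ a x : ℝ) : ℝ :=
  2*(x/σ^2)^3 * (Real.tanh (a*x/σ^2) * (1 - Real.tanh (a*x/σ^2)^2))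
noncomputable def KLk4 (σ a x : ℝ) : ℝ :=
  2*(x/σ^2)^4 * ((1 - Real.tanh (a*x/σ^2)^2) * (1 - 3*Real.tanh (a*x/σ^2)^2))

section PtDeriv
variable (σ x a : ℝ)

lemma KL_hu : HasDerivAt (fun a : ℝ => a*x/σ^2) (x/σ^2) a := by
  have := ((hasDerivAt_id a).mul_const x).div_const (σ^2)
  simpa using this

lemma KL_hd0 : HasDerivAt (fun a => KLk0 σ a x) (KLk1 σ a x) a := by
  unfold KLk0 KLk1
  have h1 : HasDerivAt (fun a : ℝ => a^2/(2*σ^2)) (2*a/(2*σ^2)) a := by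
    simpa using (hasDerivAt_pow 2 a).div_const (2*σ^2)
  have hch : HasDerivAt (fun a : ℝ => Real.cosh (a*x/σ^2)) (Real.sinh (a*x/σ^2) * (x/σ^2)) a :=
    by exact (Real.hasDerivAt_cosh (a*x/σ^2)).comp a (KL_hu σ x a)
  have h2 : HasDerivAt (fun a => Real.log (Real.cosh (a*x/σ^2)))
      ((Real.cosh (a*x/σ^2))⁻¹ * (Real.sinh (a*x/σ^2) * (x/σ^2))) a :=
    by exact (Real.hasDerivAt_log (Real.cosh_pos (a*x/σ^2)).ne').comp a hch
  refine (h1.sub h2).congr_deriv ?_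
  rw [Real.tanh_eq_sinh_div_cosh]
  have hc := (Real.cosh_pos (a*x/σ^2)).ne'
  field_simp

lemma KL_hd1 : HasDerivAt (fun a => KLk1 σ a x) (KLk2 σ a x) a := by
  unfold KLk1 KLk2
  have h1 : HasDerivAt (fun a : ℝ => a/σ^2) (1/σ^2) a := by
    simpa using (hasDerivAt_id a).div_const (σ^2)
  have ht : HasDerivAt (fun a => Real.tanh (a*x/σ^2))
      ((1 - Real.tanh (a*x/σ^2)^2) * (x/σ^2)) a :=
    by exact (KL_hasDerivAt_tanh (a*x/σ^2)).comp a (KL_hu σ x a)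
  refine (h1.sub (ht.const_mul (x/σ^2))).congr_deriv ?_
  ring

lemma KL_hd2 : HasDerivAt (fun a => KLk2 σ a x) (KLk3 σ a x) a := by
  unfold KLk2 KLk3
  have ht : HasDerivAt (fun a => Real.tanh (a*x/σ^2))
      ((1 - Real.tanh (a*x/σ^2)^2) * (x/σ^2)) a :=
    by exact (KL_hasDerivAt_tanh (a*x/σ^2)).comp a (KL_hu σ x a)
  have hsq : HasDerivAt (fun a => Real.tanh (a*x/σ^2)^2)
      (2 * Real.tanh (a*x/σ^2) * ((1 - Real.tanh (a*x/σ^2)^2) * (x/σ^2))) a := by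
    have := (hasDerivAt_pow 2 (Real.tanh (a*x/σ^2))).comp a ht
    exact this.congr_deriv (by simp only [Nat.cast_ofNat]; ring)
  have h := ((hasDerivAt_const a (1:ℝ)).sub hsq).const_mul ((x/σ^2)^2)
  have h2 := (hasDerivAt_const a (1/σ^2 : ℝ)).sub h
  refine h2.congr_deriv ?_
  ring

lemma KL_hd3 : HasDerivAt (fun a => KLk3 σ a x) (KLk4 σ a x) a := by
  unfold KLk3 KLk4
  have ht : HasDerivAt (fun a => Real.tanh (a*x/σ^2))
      ((1 - Real.tanh (a*x/σ^2)^2) * (x/σ^2)) a :=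
    by exact (KL_hasDerivAt_tanh (a*x/σ^2)).comp a (KL_hu σ x a)
  have hsq : HasDerivAt (fun a => Real.tanh (a*x/σ^2)^2)
      (2 * Real.tanh (a*x/σ^2) * ((1 - Real.tanh (a*x/σ^2)^2) * (x/σ^2))) a := by
    have := (hasDerivAt_pow 2 (Real.tanh (a*x/σ^2))).comp a ht
    exact this.congr_deriv (by simp only [Nat.cast_ofNat]; ring)
  have h := (ht.mul ((hasDerivAt_const a (1:ℝ)).sub hsq)).const_mul (2*(x/σ^2)^3)
  refine h.congr_deriv ?_
  simp only [Pi.sub_apply]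
  ring

end PtDeriv

lemma KL_cont_tanh : Continuous Real.tanh := by
  have : Real.tanh = fun y => Real.sinh y / Real.cosh y := by
    funext y; exact Real.tanh_eq_sinh_div_cosh y
  rw [this]
  exact Real.continuous_sinh.div Real.continuous_cosh (fun y => (Real.cosh_pos y).ne')

lemma KL_log_cosh_nonneg (y : ℝ) : 0 ≤ Real.log (Real.cosh y) :=
  Real.log_nonneg (Real.one_le_cosh y)

lemma KL_log_cosh_le_abs (y : ℝ) : Real.log (Real.cosh y) ≤ |y| := by
  rw [Real.log_le_iff_le_exp (Real.cosh_pos y)]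
  rw [Real.cosh_eq]
  have h1 : Real.exp y ≤ Real.exp |y| := Real.exp_le_exp.mpr (le_abs_self y)
  have h2 : Real.exp (-y) ≤ Real.exp |y| := Real.exp_le_exp.mpr (neg_le_abs y)
  linarith

lemma KL_abs_helper {p u t2 : ℝ} (hp : 0 ≤ p) (hu : 0 ≤ u) (h0 : 0 ≤ t2) (h1 : t2 ≤ 1) :
    |p - u * (1 - t2)| ≤ p + u := by
  rw [abs_le]
  constructor <;> nlinarith

section Bounds
variable {σ : ℝ} (hσ : 0 < σ)

include hσ

lemma KL_abs_div_sq (x : ℝ) : |x / σ^2| = |x| / σ^2 := by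
  rw [abs_div, abs_of_pos (by positivity : (0:ℝ) < σ^2)]

lemma KL_bound0 (a x : ℝ) : ‖KLk0 σ a x‖ ≤ a^2/(2*σ^2) + (|a|/σ^2) * |x|^1 := by
  rw [Real.norm_eq_abs, KLk0]
  have h0 := KL_log_cosh_nonneg (a*x/σ^2)
  have h1 := KL_log_cosh_le_abs (a*x/σ^2)
  have h2 : |a*x/σ^2| = |a|/σ^2 * |x| := by
    rw [KL_abs_div_sq hσ, abs_mul]; ring
  rw [h2] at h1
  rw [abs_sub_le_iff]
  constructor
  · have : (0:ℝ) ≤ a^2/(2*σ^2) := by positivity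
    simp only [pow_one]
    nlinarith
  · have : (0:ℝ) ≤ a^2/(2*σ^2) := by positivity
    have h3 : (0:ℝ) ≤ |a|/σ^2 * |x| := by positivity
    simp only [pow_one]
    nlinarith

lemma KL_bound1 (a x : ℝ) : ‖KLk1 σ a x‖ ≤ |a|/σ^2 + (1/σ^2) * |x|^1 := by
  rw [Real.norm_eq_abs, KLk1]
  have ht := KL_abs_tanh_le_one (a*x/σ^2)
  have h1 : |a/σ^2 - x/σ^2 * Real.tanh (a*x/σ^2)|
      ≤ |a/σ^2| + |x/σ^2 * Real.tanh (a*x/σ^2)| := abs_sub _ _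
  rw [abs_mul, KL_abs_div_sq hσ, KL_abs_div_sq hσ] at h1
  have h2 : |x|/σ^2 * |Real.tanh (a*x/σ^2)| ≤ |x|/σ^2 * 1 :=
    mul_le_mul_of_nonneg_left ht (by positivity)
  simp only [pow_one]
  calc |a/σ^2 - x/σ^2 * Real.tanh (a*x/σ^2)| ≤ |a|/σ^2 + |x|/σ^2 * |Real.tanh (a*x/σ^2)| := h1
    _ ≤ |a|/σ^2 + |x|/σ^2 * 1 := by linarith
    _ = |a|/σ^2 + 1/σ^2 * |x| := by ring

lemma KL_bound2 (a x : ℝ) : ‖KLk2 σ a x‖ ≤ 1/σ^2 + (1/σ^4) * |x|^2 := by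
  rw [Real.norm_eq_abs, KLk2]
  have ht2 := KL_tanh_sq_le_one (a*x/σ^2)
  have ht0 : 0 ≤ Real.tanh (a*x/σ^2)^2 := sq_nonneg _
  have h := KL_abs_helper (p := 1/σ^2) (u := (x/σ^2)^2) (by positivity) (by positivity) ht0 ht2
  refine h.trans ?_
  have hc : (x/σ^2)^2 = 1/σ^4 * |x|^2 := by
    rw [div_pow, ← sq_abs x]
    ring
  rw [hc]

lemma KL_bound3 (a x : ℝ) : ‖KLk3 σ a x‖ ≤ 0 + (2/σ^6) * |x|^3 := by
  rw [Real.norm_eq_abs, KLk3, zero_add]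
  set t := Real.tanh (a*x/σ^2)
  have ht := KL_abs_tanh_le_one (a*x/σ^2)
  have ht2 := KL_tanh_sq_le_one (a*x/σ^2)
  have h1 : |2*(x/σ^2)^3 * (t * (1 - t^2))| = 2 * (|x|/σ^2)^3 * (|t| * |1 - t^2|) := by
    rw [abs_mul, abs_mul, abs_mul, abs_pow, KL_abs_div_sq hσ]
    norm_num
  rw [h1]
  have h2 : |1 - t^2| ≤ 1 := by rw [abs_le]; constructor <;> nlinarith [sq_nonneg t]
  have h3 : |t| * |1 - t^2| ≤ 1 := by
    nlinarith [abs_nonneg t, abs_nonneg (1 - t^2)]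
  have h4 : (0:ℝ) ≤ 2 * (|x|/σ^2)^3 := by positivity
  calc 2 * (|x|/σ^2)^3 * (|t| * |1 - t^2|) ≤ 2 * (|x|/σ^2)^3 * 1 :=
        mul_le_mul_of_nonneg_left h3 h4
    _ = 2/σ^6 * |x|^3 := by
        rw [div_pow]
        ring_nf
    _ ≤ 2/σ^6 * |x|^3 := le_refl _

lemma KL_bound4 (a x : ℝ) : ‖KLk4 σ a x‖ ≤ 0 + (8/σ^8) * |x|^4 := by
  rw [Real.norm_eq_abs, KLk4, zero_add]
  set t := Real.tanh (a*x/σ^2)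
  have ht2 := KL_tanh_sq_le_one (a*x/σ^2)
  have ht0 : 0 ≤ t^2 := sq_nonneg t
  have h1 : |2*(x/σ^2)^4 * ((1 - t^2) * (1 - 3*t^2))|
      = 2 * (|x|/σ^2)^4 * (|1 - t^2| * |1 - 3*t^2|) := by
    rw [abs_mul, abs_mul, abs_mul, abs_pow, KL_abs_div_sq hσ]
    norm_num
  rw [h1]
  have h2 : |1 - t^2| ≤ 1 := by rw [abs_le]; constructor <;> nlinarith
  have h3 : |1 - 3*t^2| ≤ 4 := by rw [abs_le]; constructor <;> nlinarith
  have h4 : |1 - t^2| * |1 - 3*t^2| ≤ 4 := by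
    nlinarith [abs_nonneg (1 - t^2), abs_nonneg (1 - 3*t^2)]
  have h5 : (0:ℝ) ≤ 2 * (|x|/σ^2)^4 := by positivity
  calc 2 * (|x|/σ^2)^4 * (|1 - t^2| * |1 - 3*t^2|) ≤ 2 * (|x|/σ^2)^4 * 4 :=
        mul_le_mul_of_nonneg_left h4 h5
    _ = 8/σ^8 * |x|^4 := by rw [div_pow]; ring

end Bounds

section Main
variable {σ : ℝ} (hσ : 0 < σ)
include hσ

lemma KL_cont_u (a : ℝ) : Continuous fun x : ℝ => a*x/σ^2 :=
  (continuous_const.mul continuous_id).div_const _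

lemma KL_cont_k0 (a : ℝ) : Continuous (fun x => KLk0 σ a x) := by
  unfold KLk0
  exact continuous_const.sub
    ((Real.continuous_cosh.comp (KL_cont_u hσ a)).log (fun x => (Real.cosh_pos _).ne'))

lemma KL_cont_k1 (a : ℝ) : Continuous (fun x => KLk1 σ a x) := by
  unfold KLk1
  exact continuous_const.sub
    ((continuous_id.div_const _).mul (KL_cont_tanh.comp (KL_cont_u hσ a)))

lemma KL_cont_k2 (a : ℝ) : Continuous (fun x => KLk2 σ a x) := by
  unfold KLk2
  exact continuous_const.sub (((continuous_id.div_const _).pow 2).mul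
    (continuous_const.sub ((KL_cont_tanh.comp (KL_cont_u hσ a)).pow 2)))

lemma KL_cont_k3 (a : ℝ) : Continuous (fun x => KLk3 σ a x) := by
  unfold KLk3
  exact (continuous_const.mul ((continuous_id.div_const _).pow 3)).mul
    ((KL_cont_tanh.comp (KL_cont_u hσ a)).mul
      (continuous_const.sub ((KL_cont_tanh.comp (KL_cont_u hσ a)).pow 2)))

lemma KL_cont_k4 (a : ℝ) : Continuous (fun x => KLk4 σ a x) := by
  unfold KLk4
  exact (continuous_const.mul ((continuous_id.div_const _).pow 4)).mul
    ((continuous_const.sub ((KL_cont_tanh.comp (KL_cont_u hσ a)).pow 2)).mul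
      (continuous_const.sub (continuous_const.mul ((KL_cont_tanh.comp (KL_cont_u hσ a)).pow 2))))

lemma KL_int_bound (c d : ℝ) (n : ℕ) :
    Integrable (fun x : ℝ => c + d * |x|^n) (gaussianReal 0 (σ ^ 2).toNNReal) :=
  (integrable_const _).add ((KL_integrable_P_abs_pow hσ n).const_mul _)

lemma KL_int_k0 (a : ℝ) :
    Integrable (fun x => KLk0 σ a x) (gaussianReal 0 (σ ^ 2).toNNReal) :=
  (KL_int_bound hσ (a^2/(2*σ^2)) (|a|/σ^2) 1).mono'
    (KL_cont_k0 hσ a).aestronglyMeasurable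
    (ae_of_all _ fun x => KL_bound0 hσ a x)

lemma KL_int_k1 (a : ℝ) :
    Integrable (fun x => KLk1 σ a x) (gaussianReal 0 (σ ^ 2).toNNReal) :=
  (KL_int_bound hσ (|a|/σ^2) (1/σ^2) 1).mono'
    (KL_cont_k1 hσ a).aestronglyMeasurable
    (ae_of_all _ fun x => KL_bound1 hσ a x)

lemma KL_int_k2 (a : ℝ) :
    Integrable (fun x => KLk2 σ a x) (gaussianReal 0 (σ ^ 2).toNNReal) :=
  (KL_int_bound hσ (1/σ^2) (1/σ^4) 2).mono'
    (KL_cont_k2 hσ a).aestronglyMeasurable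
    (ae_of_all _ fun x => KL_bound2 hσ a x)

lemma KL_int_k3 (a : ℝ) :
    Integrable (fun x => KLk3 σ a x) (gaussianReal 0 (σ ^ 2).toNNReal) :=
  (KL_int_bound hσ 0 (2/σ^6) 3).mono'
    (KL_cont_k3 hσ a).aestronglyMeasurable
    (ae_of_all _ fun x => KL_bound3 hσ a x)

lemma KL_int_k4 (a : ℝ) :
    Integrable (fun x => KLk4 σ a x) (gaussianReal 0 (σ ^ 2).toNNReal) :=
  (KL_int_bound hσ 0 (8/σ^8) 4).mono'
    (KL_cont_k4 hσ a).aestronglyMeasurable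
    (ae_of_all _ fun x => KL_bound4 hσ a x)

lemma KL_step0 (a₀ : ℝ) :
    HasDerivAt (fun a => ∫ x, KLk0 σ a x ∂(gaussianReal 0 (σ ^ 2).toNNReal))
      (∫ x, KLk1 σ a₀ x ∂(gaussianReal 0 (σ ^ 2).toNNReal)) a₀ := by
  refine (hasDerivAt_integral_of_dominated_loc_of_deriv_le (Metric.ball_mem_nhds a₀ one_pos)
    (Eventually.of_forall fun b => (KL_cont_k0 hσ b).aestronglyMeasurable)
    (KL_int_k0 hσ a₀)
    (KL_cont_k1 hσ a₀).aestronglyMeasurable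
    (F' := fun b x => KLk1 σ b x)
    (bound := fun x => (|a₀|+1)/σ^2 + (1/σ^2) * |x|^1)
    (ae_of_all _ fun x b hb => ?_)
    (KL_int_bound hσ _ _ 1)
    (ae_of_all _ fun x b _ => KL_hd0 σ x b)).2
  · have hb1 : |b| ≤ |a₀| + 1 := by
      rw [Metric.mem_ball, Real.dist_eq] at hb
      have := abs_sub_abs_le_abs_sub b a₀
      linarith
    refine (KL_bound1 hσ b x).trans ?_
    have : |b|/σ^2 ≤ (|a₀|+1)/σ^2 := by gcongr
    linarith

end Main

section Main2
variable {σ : ℝ} (hσ : 0 < σ)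
include hσ

lemma KL_step1 (a₀ : ℝ) :
    HasDerivAt (fun a => ∫ x, KLk1 σ a x ∂(gaussianReal 0 (σ ^ 2).toNNReal))
      (∫ x, KLk2 σ a₀ x ∂(gaussianReal 0 (σ ^ 2).toNNReal)) a₀ :=
  (hasDerivAt_integral_of_dominated_loc_of_deriv_le (Metric.ball_mem_nhds a₀ one_pos)
    (Eventually.of_forall fun b => (KL_cont_k1 hσ b).aestronglyMeasurable)
    (KL_int_k1 hσ a₀)
    (KL_cont_k2 hσ a₀).aestronglyMeasurable
    (F' := fun b x => KLk2 σ b x)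
    (bound := fun x => 1/σ^2 + (1/σ^4) * |x|^2)
    (ae_of_all _ fun x b _ => KL_bound2 hσ b x)
    (KL_int_bound hσ _ _ 2)
    (ae_of_all _ fun x b _ => KL_hd1 σ x b)).2

lemma KL_step2 (a₀ : ℝ) :
    HasDerivAt (fun a => ∫ x, KLk2 σ a x ∂(gaussianReal 0 (σ ^ 2).toNNReal))
      (∫ x, KLk3 σ a₀ x ∂(gaussianReal 0 (σ ^ 2).toNNReal)) a₀ :=
  (hasDerivAt_integral_of_dominated_loc_of_deriv_le (Metric.ball_mem_nhds a₀ one_pos)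
    (Eventually.of_forall fun b => (KL_cont_k2 hσ b).aestronglyMeasurable)
    (KL_int_k2 hσ a₀)
    (KL_cont_k3 hσ a₀).aestronglyMeasurable
    (F' := fun b x => KLk3 σ b x)
    (bound := fun x => 0 + (2/σ^6) * |x|^3)
    (ae_of_all _ fun x b _ => KL_bound3 hσ b x)
    (KL_int_bound hσ _ _ 3)
    (ae_of_all _ fun x b _ => KL_hd2 σ x b)).2

lemma KL_step3 (a₀ : ℝ) :
    HasDerivAt (fun a => ∫ x, KLk3 σ a x ∂(gaussianReal 0 (σ ^ 2).toNNReal))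
      (∫ x, KLk4 σ a₀ x ∂(gaussianReal 0 (σ ^ 2).toNNReal)) a₀ :=
  (hasDerivAt_integral_of_dominated_loc_of_deriv_le (Metric.ball_mem_nhds a₀ one_pos)
    (Eventually.of_forall fun b => (KL_cont_k3 hσ b).aestronglyMeasurable)
    (KL_int_k3 hσ a₀)
    (KL_cont_k4 hσ a₀).aestronglyMeasurable
    (F' := fun b x => KLk4 σ b x)
    (bound := fun x => 0 + (8/σ^8) * |x|^4)
    (ae_of_all _ fun x b _ => KL_bound4 hσ b x)
    (KL_int_bound hσ _ _ 4)
    (ae_of_all _ fun x b _ => KL_hd3 σ x b)).2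

-- evaluations at 0
lemma KL_eval0 : ∫ x, KLk0 σ 0 x ∂(gaussianReal 0 (σ ^ 2).toNNReal) = 0 := by
  have : ∀ x : ℝ, KLk0 σ 0 x = 0 := by
    intro x
    simp [KLk0]
  simp only [this, integral_zero]

lemma KL_eval1 : ∫ x, KLk1 σ 0 x ∂(gaussianReal 0 (σ ^ 2).toNNReal) = 0 := by
  have : ∀ x : ℝ, KLk1 σ 0 x = 0 := by
    intro x
    simp [KLk1, Real.tanh_zero]
  simp only [this, integral_zero]

lemma KL_eval3 : ∫ x, KLk3 σ 0 x ∂(gaussianReal 0 (σ ^ 2).toNNReal) = 0 := by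
  have : ∀ x : ℝ, KLk3 σ 0 x = 0 := by
    intro x
    simp [KLk3, Real.tanh_zero]
  simp only [this, integral_zero]

lemma KL_eval2 : ∫ x, KLk2 σ 0 x ∂(gaussianReal 0 (σ ^ 2).toNNReal) = 0 := by
  have hk : ∀ x : ℝ, KLk2 σ 0 x = 1/σ^2 * x^0 - 1/σ^4 * x^2 := by
    intro x
    simp only [KLk2, Real.tanh_zero]
    simp only [zero_mul, zero_div]
    rw [show Real.tanh 0 = 0 from Real.tanh_zero]
    field_simp
    ring
  simp only [hk]
  rw [KL_integral_P hσ]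
  have h1 := (KL_integrable_pdf_pow hσ 0).const_mul (1/σ^2)
  have h2 := (KL_integrable_pdf_pow hσ 2).const_mul (1/σ^4)
  rw [show (fun x => gaussianPDFReal 0 (σ ^ 2).toNNReal x * (1/σ^2 * x^0 - 1/σ^4 * x^2))
      = fun x => 1/σ^2 * (gaussianPDFReal 0 (σ ^ 2).toNNReal x * x^0)
        - 1/σ^4 * (gaussianPDFReal 0 (σ ^ 2).toNNReal x * x^2) by funext x; ring]
  rw [integral_sub (by simpa [mul_comm] using h1) (by simpa [mul_comm] using h2)]
  rw [integral_const_mul, integral_const_mul, KL_moment_zero hσ, KL_moment_two hσ]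
  field_simp
  ring

lemma KL_eval4 : ∫ x, KLk4 σ 0 x ∂(gaussianReal 0 (σ ^ 2).toNNReal) = 6 / σ^4 := by
  have hk : ∀ x : ℝ, KLk4 σ 0 x = 2/σ^8 * x^4 := by
    intro x
    simp only [KLk4, zero_mul, zero_div, Real.tanh_zero]
    norm_num
    rw [div_pow]
    ring
  simp only [hk]
  rw [KL_integral_P hσ]
  rw [show (fun x => gaussianPDFReal 0 (σ ^ 2).toNNReal x * (2/σ^8 * x^4))
      = fun x => 2/σ^8 * (gaussianPDFReal 0 (σ ^ 2).toNNReal x * x^4) by funext x; ring]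
  rw [integral_const_mul, KL_moment_four hσ]
  field_simp
  ring

end Main2

/-- For `σ > 0`, the derivatives at `a = 0` of
`g(a) = D(N(0,σ²) ‖ (1/2)·N(−a,σ²) + (1/2)·N(a,σ²))` of orders `0` through `3`
all vanish, and the fourth derivative satisfies `g⁗(0) = 6/σ⁴` (so the
fourth-order Taylor term of `g` at `0` is `a⁴/(4σ⁴)`). -/
theorem stmt_7 (σ : ℝ) (hσ : 0 < σ) :
    iteratedDeriv 0 (klMix σ) 0 = 0 ∧
    iteratedDeriv 1 (klMix σ) 0 = 0 ∧
    iteratedDeriv 2 (klMix σ) 0 = 0 ∧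
    iteratedDeriv 3 (klMix σ) 0 = 0 ∧
    iteratedDeriv 4 (klMix σ) 0 = 6 / σ ^ 4 := by
  have hK : klMix σ = fun a => ∫ x, KLk0 σ a x ∂(gaussianReal 0 (σ ^ 2).toNNReal) := by
    funext a
    exact KL_klMix_eq hσ a
  have hG1 : deriv (klMix σ) = fun a => ∫ x, KLk1 σ a x ∂(gaussianReal 0 (σ ^ 2).toNNReal) := by
    funext a
    rw [hK]
    exact (KL_step0 hσ a).deriv
  have hG2 : deriv (deriv (klMix σ))
      = fun a => ∫ x, KLk2 σ a x ∂(gaussianReal 0 (σ ^ 2).toNNReal) := by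
    funext a
    rw [hG1]
    exact (KL_step1 hσ a).deriv
  have hG3 : deriv (deriv (deriv (klMix σ)))
      = fun a => ∫ x, KLk3 σ a x ∂(gaussianReal 0 (σ ^ 2).toNNReal) := by
    funext a
    rw [hG2]
    exact (KL_step2 hσ a).deriv
  have hG4 : deriv (deriv (deriv (deriv (klMix σ))))
      = fun a => ∫ x, KLk4 σ a x ∂(gaussianReal 0 (σ ^ 2).toNNReal) := by
    funext a
    rw [hG3]
    exact (KL_step3 hσ a).deriv
  refine ⟨?_, ?_, ?_, ?_, ?_⟩
  · rw [iteratedDeriv_zero, hK]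
    exact KL_eval0 hσ
  · rw [iteratedDeriv_one, hG1]
    exact KL_eval1 hσ
  · show iteratedDeriv (1+1) (klMix σ) 0 = 0
    rw [iteratedDeriv_succ', iteratedDeriv_one, hG1]
    have : deriv (fun a => ∫ x, KLk1 σ a x ∂(gaussianReal 0 (σ ^ 2).toNNReal))
        = fun a => ∫ x, KLk2 σ a x ∂(gaussianReal 0 (σ ^ 2).toNNReal) :=
      funext fun a => (KL_step1 hσ a).deriv
    rw [this]
    exact KL_eval2 hσ
  · show iteratedDeriv (1+1+1) (klMix σ) 0 = 0
    rw [iteratedDeriv_succ', iteratedDeriv_succ', iteratedDeriv_one, hG1]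
    have h2 : deriv (fun a => ∫ x, KLk1 σ a x ∂(gaussianReal 0 (σ ^ 2).toNNReal))
        = fun a => ∫ x, KLk2 σ a x ∂(gaussianReal 0 (σ ^ 2).toNNReal) :=
      funext fun a => (KL_step1 hσ a).deriv
    have h3 : deriv (fun a => ∫ x, KLk2 σ a x ∂(gaussianReal 0 (σ ^ 2).toNNReal))
        = fun a => ∫ x, KLk3 σ a x ∂(gaussianReal 0 (σ ^ 2).toNNReal) :=
      funext fun a => (KL_step2 hσ a).deriv
    rw [h2, h3]
    exact KL_eval3 hσ
  · show iteratedDeriv (1+1+1+1) (klMix σ) 0 = 6 / σ ^ 4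
    rw [iteratedDeriv_succ', iteratedDeriv_succ', iteratedDeriv_succ', iteratedDeriv_one, hG1]
    have h2 : deriv (fun a => ∫ x, KLk1 σ a x ∂(gaussianReal 0 (σ ^ 2).toNNReal))
        = fun a => ∫ x, KLk2 σ a x ∂(gaussianReal 0 (σ ^ 2).toNNReal) :=
      funext fun a => (KL_step1 hσ a).deriv
    have h3 : deriv (fun a => ∫ x, KLk2 σ a x ∂(gaussianReal 0 (σ ^ 2).toNNReal))
        = fun a => ∫ x, KLk3 σ a x ∂(gaussianReal 0 (σ ^ 2).toNNReal) :=
      funext fun a => (KL_step2 hσ a).deriv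
    have h4 : deriv (fun a => ∫ x, KLk3 σ a x ∂(gaussianReal 0 (σ ^ 2).toNNReal))
        = fun a => ∫ x, KLk4 σ a x ∂(gaussianReal 0 (σ ^ 2).toNNReal) :=
      funext fun a => (KL_step3 hσ a).deriv
    rw [h2, h3, h4]
    exact KL_eval4 hσ
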